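/- For every integer m ≥ 2, (m/(m+1)) · (m²/(m²−1))^{(m−1)/2} ≤ exp(−1/(2(m+1))). -/

import Mathlib

/-- For every integer `m ≥ 2`,
`(m/(m+1)) · (m²/(m²-1))^((m-1)/2) ≤ exp(-1/(2(m+1)))`. -/
theorem stmt_13 (m : ℕ) (hm : 2 ≤ m) :
    ((m : ℝ) / ((m : ℝ) + 1)) *
        ((m : ℝ) ^ 2 / ((m : ℝ) ^ 2 - 1)) ^ (((m : ℝ) - 1) / 2) ≤
      Real.exp (-1 / (2 * ((m : ℝ) + 1))) := by
  have hx : (2:ℝ) ≤ (m:ℝ) := by exact_mod_cast hm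
  set x := (m:ℝ) with hxdef
  have hx1 : (0:ℝ) < x + 1 := by linarith
  have hx2 : (0:ℝ) < x ^ 2 - 1 := by nlinarith
  have h1 : x / (x + 1) ≤ Real.exp (-1 / (x + 1)) := by
    have h := Real.add_one_le_exp (-1 / (x + 1))
    have he : -1 / (x + 1) + 1 = x / (x + 1) := by field_simp; ring
    linarith
  have h2 : (x ^ 2 / (x ^ 2 - 1)) ^ ((x - 1) / 2)
      ≤ Real.exp ((x - 1) / (2 * (x ^ 2 - 1))) := by
    have hb : x ^ 2 / (x ^ 2 - 1) ≤ Real.exp (1 / (x ^ 2 - 1)) := by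
      have h := Real.add_one_le_exp (1 / (x ^ 2 - 1))
      have he : 1 / (x ^ 2 - 1) + 1 = x ^ 2 / (x ^ 2 - 1) := by field_simp; ring
      linarith
    calc (x ^ 2 / (x ^ 2 - 1)) ^ ((x - 1) / 2)
        ≤ (Real.exp (1 / (x ^ 2 - 1))) ^ ((x - 1) / 2) :=
          Real.rpow_le_rpow (by positivity) hb (by linarith)
      _ = Real.exp ((x - 1) / (2 * (x ^ 2 - 1))) := by
          rw [← Real.exp_mul]
          congr 1
          have h2 : x ^ 2 - 1 ≠ 0 := ne_of_gt hx2
          field_simp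
  have hpos : (0:ℝ) ≤ x / (x + 1) := by positivity
  have hmul : x / (x + 1) * (x ^ 2 / (x ^ 2 - 1)) ^ ((x - 1) / 2)
      ≤ Real.exp (-1 / (x + 1)) * Real.exp ((x - 1) / (2 * (x ^ 2 - 1))) := by
    exact mul_le_mul h1 h2 (by positivity) (Real.exp_nonneg _)
  calc x / (x + 1) * (x ^ 2 / (x ^ 2 - 1)) ^ ((x - 1) / 2)
      ≤ Real.exp (-1 / (x + 1)) * Real.exp ((x - 1) / (2 * (x ^ 2 - 1))) := hmul
    _ = Real.exp (-1 / (x + 1) + (x - 1) / (2 * (x ^ 2 - 1))) :=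
        (Real.exp_add _ _).symm
    _ = Real.exp (-1 / (2 * (x + 1))) := by
        congr 1
        have hxm1 : x - 1 ≠ 0 := by linarith
        have h21 : x + 1 ≠ 0 := ne_of_gt hx1
        have : x ^ 2 - 1 = (x - 1) * (x + 1) := by ring
        rw [this]
        field_simp
        ring
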